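/- arXiv:0811.2117 — 2 statements merged into one kernel-verified Lean document; each statement's English description precedes it below -/
import Mathlib

section
/- For a single key constraint, the canonical disjunctive database representing the repairs of a relation r has size exactly |r|: it consists of one disjunction per clique, containing exactly the facts of that clique, and it equals its own reduction, hence it is the unique minimal-size representation. -/
variable {F : Type*} [DecidableEq F]

/-- M is a model of the disjunctive database D: it meets every disjunction. -/
def IsModel (D : Finset (Finset F)) (M : Finset F) : Prop :=
  ∀ d ∈ D, ∃ t ∈ d, t ∈ M

/-- M is a minimal model of D. -/
def IsMinModel (D : Finset (Finset F)) (M : Finset F) : Prop :=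
  IsModel D M ∧ ∀ M' ⊂ M, ¬ IsModel D M'

/-- reduction removes every disjunction properly containing another disjunction of D. -/
def reduction (D : Finset (Finset F)) : Finset (Finset F) :=
  D.filter (fun d => ∀ d' ∈ D, ¬ d' ⊂ d)

/-- Every model of a (finite) disjunctive database contains a minimal model. -/
lemma exists_min_model {D : Finset (Finset F)} :
    ∀ M : Finset F, IsModel D M → ∃ M0 ⊆ M, IsMinModel D M0 := by
  classical
  intro M
  induction M using Finset.strongInductionOn with
  | _ M ih =>
    intro hM
    by_cases h : ∃ M' ⊂ M, IsModel D M'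
    · obtain ⟨M', hsub, hM'⟩ := h
      obtain ⟨M0, h0, h0m⟩ := ih M' hsub hM'
      exact ⟨M0, h0.trans hsub.subset, h0m⟩
    · refine ⟨M, subset_rfl, hM, fun M' hs hm => h ⟨M', hs, hm⟩⟩

/-- Any transversal (one element per clique) is a minimal model of the clique database. -/
lemma transversal_min {n : ℕ} {C : Fin n → Finset F}
    (hdisj : ∀ i j, i ≠ j → Disjoint (C i) (C j))
    (g : Fin n → F) (hg : ∀ j, g j ∈ C j) :
    IsMinModel (Finset.univ.image C) (Finset.univ.image g) := by
  constructor
  · intro d hd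
    obtain ⟨j, -, rfl⟩ := Finset.mem_image.mp hd
    exact ⟨g j, hg j, Finset.mem_image_of_mem g (Finset.mem_univ j)⟩
  · intro M' hsub hm
    obtain ⟨x, hxT, hxM⟩ := Finset.exists_of_ssubset hsub
    obtain ⟨j, -, rfl⟩ := Finset.mem_image.mp hxT
    obtain ⟨y, hyC, hyM⟩ := hm (C j) (Finset.mem_image_of_mem C (Finset.mem_univ j))
    have hyT := hsub.subset hyM
    obtain ⟨k, -, hk⟩ := Finset.mem_image.mp hyT
    have hkj : k = j := by
      by_contra hkj
      exact Finset.disjoint_left.mp (hdisj k j hkj) (hk ▸ hg k) hyC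
    subst hkj
    exact hxM (hk ▸ hyM)

theorem stmt7 (n : ℕ) (C : Fin n → Finset F)
    (hne : ∀ i, (C i).Nonempty)
    (hdisj : ∀ i j, i ≠ j → Disjoint (C i) (C j))
    (r : Finset F) (hr : r = Finset.univ.biUnion C) :
    (∑ d ∈ Finset.univ.image C, d.card) = r.card
    ∧ reduction (Finset.univ.image C) = Finset.univ.image C
    ∧ (∀ D' : Finset (Finset F), (∀ d ∈ D', d.Nonempty) →
        (∀ M : Finset F, IsMinModel D' M ↔ IsMinModel (Finset.univ.image C) M) →
        Finset.univ.image C ⊆ D') := by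
  classical
  have hinj : Function.Injective C := by
    intro i j hij
    by_contra hne'
    exact (hne i).ne_empty (disjoint_self.mp (hij ▸ hdisj i j hne'))
  refine ⟨?_, ?_, ?_⟩
  · rw [Finset.sum_image (fun i _ j _ h => hinj h), hr,
      Finset.card_biUnion (fun i _ j hj h => hdisj i j h)]
  · apply Finset.filter_true_of_mem
    intro d hd d' hd' hss
    obtain ⟨i, -, rfl⟩ := Finset.mem_image.mp hd
    obtain ⟨j, -, rfl⟩ := Finset.mem_image.mp hd'
    rcases eq_or_ne j i with h | h
    · exact (ssubset_irrefl _) (h ▸ hss)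
    · obtain ⟨x, hx⟩ := hne j
      exact Finset.disjoint_left.mp (hdisj j i h) hx (hss.subset hx)
  · intro D' hD'ne hiff d0 hd0
    obtain ⟨i, -, rfl⟩ := Finset.mem_image.mp hd0
    by_cases hex : ∃ d ∈ D', d ⊆ C i
    · obtain ⟨d, hd, hdsub⟩ := hex
      have hCi : C i ⊆ d := by
        intro t ht
        set g : Fin n → F := fun j => if h : j = i then t else (hne j).choose with hgdef
        have hg : ∀ j, g j ∈ C j := by
          intro j
          by_cases h : j = i
          · subst h; simpa [hgdef] using ht
          · simpa [hgdef, h] using (hne j).choose_spec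
        have hmin : IsMinModel D' (Finset.univ.image g) :=
          (hiff _).mpr (transversal_min hdisj g hg)
        obtain ⟨y, hyd, hyT⟩ := hmin.1 d hd
        obtain ⟨k, -, hk⟩ := Finset.mem_image.mp hyT
        have hki : k = i := by
          by_contra hki
          exact Finset.disjoint_left.mp (hdisj k i hki) (hk ▸ hg k) (hdsub hyd)
        have : y = t := by
          rw [← hk, hki, hgdef]; simp
        exact this ▸ hyd
      rwa [Finset.Subset.antisymm hdsub hCi] at hd
    · push_neg at hex
      have h1 : ∀ d ∈ D', ∃ x ∈ d, x ∉ C i := by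
        intro d hd
        exact Finset.not_subset.mp (hex d hd)
      choose f hf1 hf2 using h1
      set M : Finset F := D'.attach.image (fun d => f d.1 d.2) with hM
      have hMmod : IsModel D' M := by
        intro d hd
        exact ⟨f d hd, hf1 d hd,
          Finset.mem_image.mpr ⟨⟨d, hd⟩, Finset.mem_attach _ _, rfl⟩⟩
      obtain ⟨M0, hM0sub, hM0min⟩ := exists_min_model M hMmod
      have hmc : IsMinModel (Finset.univ.image C) M0 := (hiff _).mp hM0min
      obtain ⟨t, htC, htM0⟩ := hmc.1 (C i) (Finset.mem_image_of_mem C (Finset.mem_univ i))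
      obtain ⟨⟨d, hd⟩, -, hdt⟩ := Finset.mem_image.mp (hM0sub htM0)
      exact absurd (hdt ▸ htC) (hf2 d hd)
end

section
/- For the conflict graph of the family D_n (edges {t_{i1},t_{j1}} for i≠j, {t_{i1},t_{i2}}, {t_{i2},t_{i3}}), the cardinality-based repairs (consistent subsets of maximum cardinality) are exactly the sets {t_{i1}, t_{i3}} ∪ { t_j : j ≠ i } with t_j ∈ {t_{j2}, t_{j3}}, for 1 ≤ i ≤ n and n ≥ 2; in particular the repair {t_{12},...,t_{n2}} of cardinality n is not cardinality-based since the others have cardinality n+1. -/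
variable {F : Type*} [DecidableEq F]

/-- S is conflict-free w.r.t. a binary conflict relation G. -/
def ConflictFree (G : F → F → Prop) (S : Finset F) : Prop :=
  ∀ a ∈ S, ∀ b ∈ S, ¬ G a b

/-- S is a repair of V w.r.t. conflict relation G: a maximal conflict-free subset of V. -/
def IsRepairC (V : Finset F) (G : F → F → Prop) (S : Finset F) : Prop :=
  S ⊆ V ∧ ConflictFree G S ∧ ∀ S', S ⊂ S' → S' ⊆ V → ¬ ConflictFree G S'

/-- Conflict relation of the family D_n: facts are (i,k) with k=0,1,2 encoding
    t_{i1}, t_{i2}, t_{i3}. Edges: {t_{i1},t_{j1}} for i≠j, {t_{i1},t_{i2}}, {t_{i2},t_{i3}}. -/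
def ConfDn (n : ℕ) (a b : Fin n × Fin 3) : Prop :=
  (a.2 = 0 ∧ b.2 = 0 ∧ a.1 ≠ b.1) ∨
  (a.1 = b.1 ∧ ((a.2 = 0 ∧ b.2 = 1) ∨ (a.2 = 1 ∧ b.2 = 0) ∨
                (a.2 = 1 ∧ b.2 = 2) ∨ (a.2 = 2 ∧ b.2 = 1)))

/-- The repair {t_{12},...,t_{n2}}. -/
def repA (n : ℕ) : Finset (Fin n × Fin 3) :=
  Finset.univ.image (fun i => (i, (1 : Fin 3)))

/-- The repair {t_{i1}, t_{i3}} ∪ { (j, f j) : j ≠ i } (for f choosing among t_{j2}, t_{j3}). -/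
def repB (n : ℕ) (i : Fin n) (f : Fin n → Fin 3) : Finset (Fin n × Fin 3) :=
  insert (i, (0 : Fin 3)) (insert (i, (2 : Fin 3))
    ((Finset.univ.erase i).image (fun j => (j, f j))))

/-- The disjunctions t_{i2} ∨ t_{i3}. -/
def DnD1 (n : ℕ) : Finset (Finset (Fin n × Fin 3)) :=
  Finset.univ.image (fun i : Fin n => ({(i, (1 : Fin 3)), (i, (2 : Fin 3))} : Finset (Fin n × Fin 3)))

/-- The disjunctions t_{i1} ∨ t_{i2} ∨ ⋁_{z ≠ i} t_z with t_z ∈ {t_{z1}, t_{z3}}. -/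
def DnD2 (n : ℕ) : Finset (Finset (Fin n × Fin 3)) :=
  Finset.univ.image (fun p : Fin n × (Fin n → Bool) =>
    insert (p.1, (0 : Fin 3)) (insert (p.1, (1 : Fin 3))
      ((Finset.univ.erase p.1).image
        (fun z => (z, if p.2 z then (0 : Fin 3) else (2 : Fin 3))))))

/-- The disjunctions t_1 ∨ ... ∨ t_n with t_i ∈ {t_{i1}, t_{i3}}. -/
def DnD3 (n : ℕ) : Finset (Finset (Fin n × Fin 3)) :=
  Finset.univ.image (fun g : Fin n → Bool =>
    Finset.univ.image (fun i : Fin n => (i, if g i then (0 : Fin 3) else (2 : Fin 3))))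

/-- A cardinality-based repair: a conflict-free set of maximum cardinality. -/
def IsCardRepair (G : F → F → Prop) (S : Finset F) : Prop :=
  ConflictFree G S ∧ ∀ S' : Finset F, ConflictFree G S' → S'.card ≤ S.card

section Aux

variable {n : ℕ}

lemma fin3cases (c : Fin 3) : c = 0 ∨ c = 1 ∨ c = 2 := by revert c; decide

lemma cf01 {S : Finset (Fin n × Fin 3)} (hS : ConflictFree (ConfDn n) S) {i : Fin n}
    (h0 : (i, (0:Fin 3)) ∈ S) : (i, (1:Fin 3)) ∉ S :=
  fun h1 => hS _ h0 _ h1 (Or.inr ⟨rfl, Or.inl ⟨rfl, rfl⟩⟩)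

lemma cf12 {S : Finset (Fin n × Fin 3)} (hS : ConflictFree (ConfDn n) S) {i : Fin n}
    (h1 : (i, (1:Fin 3)) ∈ S) : (i, (2:Fin 3)) ∉ S :=
  fun h2 => hS _ h1 _ h2 (Or.inr ⟨rfl, Or.inr (Or.inr (Or.inl ⟨rfl, rfl⟩))⟩)

lemma cf00 {S : Finset (Fin n × Fin 3)} (hS : ConflictFree (ConfDn n) S) {i j : Fin n}
    (hi : (i, (0:Fin 3)) ∈ S) (hj : (j, (0:Fin 3)) ∈ S) : i = j :=
  by_contra fun h => hS _ hi _ hj (Or.inl ⟨rfl, rfl, h⟩)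

lemma mem_repB (i : Fin n) (f : Fin n → Fin 3) (p : Fin n × Fin 3) :
    p ∈ repB n i f ↔ p = (i, 0) ∨ p = (i, 2) ∨ (p.1 ≠ i ∧ p.2 = f p.1) := by
  simp only [repB, Finset.mem_insert, Finset.mem_image, Finset.mem_erase, Finset.mem_univ,
    and_true]
  constructor
  · rintro (h | h | ⟨j, hj, rfl⟩)
    · exact Or.inl h
    · exact Or.inr (Or.inl h)
    · exact Or.inr (Or.inr ⟨hj, rfl⟩)
  · rintro (h | h | ⟨h1, h2⟩)
    · exact Or.inl h
    · exact Or.inr (Or.inl h)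
    · exact Or.inr (Or.inr ⟨p.1, h1, by rw [← h2]⟩)

lemma fib_le_one {S : Finset (Fin n × Fin 3)} (hS : ConflictFree (ConfDn n) S) {j : Fin n}
    (h0 : (j, (0:Fin 3)) ∉ S) : (S.filter (fun p => p.1 = j)).card ≤ 1 := by
  rw [Finset.card_le_one]
  rintro ⟨a1, a2⟩ ha ⟨b1, b2⟩ hb
  simp only [Finset.mem_filter] at ha hb
  obtain ⟨haS, rfl⟩ := ha
  obtain ⟨hbS, h⟩ := hb
  subst h
  rcases fin3cases a2 with h | h | h <;> rcases fin3cases b2 with h' | h' | h' <;>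
    subst h <;> subst h'
  all_goals first
    | rfl
    | exact absurd haS h0
    | exact absurd hbS h0
    | exact (hS _ haS _ hbS (Or.inr ⟨rfl, by simp⟩)).elim

lemma fib_le_two {S : Finset (Fin n × Fin 3)} (hS : ConflictFree (ConfDn n) S) (j : Fin n) :
    (S.filter (fun p => p.1 = j)).card ≤ 2 := by
  by_cases h0 : (j, (0:Fin 3)) ∈ S
  · have hsub : S.filter (fun p => p.1 = j) ⊆ {(j, 0), (j, 2)} := by
      rintro ⟨a1, a2⟩ ha
      simp only [Finset.mem_filter] at ha
      obtain ⟨haS, rfl⟩ := ha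
      rcases fin3cases a2 with h | h | h <;> subst h
      · simp
      · exact absurd haS (cf01 hS h0)
      · simp
    calc (S.filter (fun p => p.1 = j)).card ≤ ({(j, 0), (j, 2)} : Finset _).card :=
          Finset.card_le_card hsub
      _ ≤ 2 := Finset.card_insert_le _ _ |>.trans (by simp)
  · exact (fib_le_one hS h0).trans (by omega)

lemma card_fiberwise (S : Finset (Fin n × Fin 3)) :
    S.card = ∑ j : Fin n, (S.filter (fun p => p.1 = j)).card :=
  Finset.card_eq_sum_card_fiberwise (fun p _ => Finset.mem_univ p.1)

lemma cf_card_le {S : Finset (Fin n × Fin 3)} (hS : ConflictFree (ConfDn n) S) :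
    S.card ≤ n + 1 := by
  rw [card_fiberwise]
  by_cases h : ∃ i : Fin n, (i, (0:Fin 3)) ∈ S
  · obtain ⟨i, hi⟩ := h
    rw [← Finset.add_sum_erase _ _ (Finset.mem_univ i)]
    have h1 : ∑ j ∈ Finset.univ.erase i, (S.filter (fun p => p.1 = j)).card ≤
        (Finset.univ.erase i).card * 1 := by
      apply Finset.sum_le_card_nsmul
      intro j hj
      apply fib_le_one hS
      intro hc
      exact (Finset.mem_erase.mp hj).1 (cf00 hS hc hi)
    have h2 := fib_le_two hS i
    have h3 : (Finset.univ.erase i : Finset (Fin n)).card = n - 1 := by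
      rw [Finset.card_erase_of_mem (Finset.mem_univ i)]; simp
    have h4 : 1 ≤ n := i.pos
    omega
  · push_neg at h
    calc ∑ j : Fin n, (S.filter (fun p => p.1 = j)).card ≤ Finset.univ.card * 1 :=
        Finset.sum_le_card_nsmul _ _ _ (fun j _ => fib_le_one hS (h j))
      _ ≤ n + 1 := by simp

lemma forced {α : Type*} [DecidableEq α] {s : Finset α} {f : α → ℕ} (hle : ∀ x ∈ s, f x ≤ 1)
    (hsum : s.card ≤ ∑ x ∈ s, f x) : ∀ x ∈ s, f x = 1 := by
  intro x hx
  by_contra hne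
  have h0 : f x = 0 := by have := hle x hx; omega
  have he : ∑ y ∈ s, f y = ∑ y ∈ s.erase x, f y := by
    rw [← Finset.add_sum_erase s f hx, h0, Nat.zero_add]
  have h2 : ∑ y ∈ s.erase x, f y ≤ (s.erase x).card * 1 :=
    Finset.sum_le_card_nsmul _ _ _ (fun y hy => hle y (Finset.mem_of_mem_erase hy))
  have h3 := Finset.card_erase_of_mem hx
  have h4 : 0 < s.card := Finset.card_pos.mpr ⟨x, hx⟩
  omega

lemma structure_lemma {S : Finset (Fin n × Fin 3)} (hS : ConflictFree (ConfDn n) S)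
    (hcard : S.card = n + 1) :
    ∃ (i : Fin n) (f : Fin n → Fin 3), (∀ j, f j = 1 ∨ f j = 2) ∧ S = repB n i f := by
  -- there is an index with a 0
  have hex : ∃ i : Fin n, (i, (0:Fin 3)) ∈ S := by
    by_contra h
    push_neg at h
    have : S.card ≤ n := by
      rw [card_fiberwise]
      calc ∑ j : Fin n, (S.filter (fun p => p.1 = j)).card ≤ Finset.univ.card * 1 :=
          Finset.sum_le_card_nsmul _ _ _ (fun j _ => fib_le_one hS (h j))
        _ = n := by simp
    omega
  obtain ⟨i, hi⟩ := hex
  have hnz : ∀ j : Fin n, j ≠ i → (j, (0:Fin 3)) ∉ S := fun j hj hc => hj (cf00 hS hc hi)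
  have h4 : 1 ≤ n := i.pos
  have hsum : (S.filter (fun p => p.1 = i)).card +
      ∑ j ∈ Finset.univ.erase i, (S.filter (fun p => p.1 = j)).card = n + 1 := by
    have h := card_fiberwise S
    rw [← Finset.add_sum_erase _ _ (Finset.mem_univ i)] at h
    omega
  have herase : (Finset.univ.erase i : Finset (Fin n)).card = n - 1 := by
    rw [Finset.card_erase_of_mem (Finset.mem_univ i)]; simp
  have hle1 : ∀ j ∈ Finset.univ.erase i, (S.filter (fun p => p.1 = j)).card ≤ 1 :=
    fun j hj => fib_le_one hS (hnz j (Finset.mem_erase.mp hj).1)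
  have hsum2 : ∑ j ∈ Finset.univ.erase i, (S.filter (fun p => p.1 = j)).card ≤ n - 1 := by
    have := Finset.sum_le_card_nsmul _ _ 1 hle1
    simpa [herase] using this
  have hgi : (S.filter (fun p => p.1 = i)).card = 2 := by
    have := fib_le_two hS i
    omega
  have hforced : ∀ j ∈ Finset.univ.erase i, (S.filter (fun p => p.1 = j)).card = 1 :=
    forced hle1 (by omega)
  -- fiber at i is exactly {(i,0),(i,2)}
  have hfi : S.filter (fun p => p.1 = i) = {(i, 0), (i, 2)} := by
    apply Finset.eq_of_subset_of_card_le
    · rintro ⟨a1, a2⟩ ha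
      simp only [Finset.mem_filter] at ha
      obtain ⟨haS, rfl⟩ := ha
      rcases fin3cases a2 with h | h | h <;> subst h
      · simp
      · exact absurd haS (cf01 hS hi)
      · simp
    · rw [hgi]
      exact Finset.card_insert_le _ _ |>.trans (by simp)
  have h2i : (i, (2:Fin 3)) ∈ S := by
    have : (i, (2:Fin 3)) ∈ S.filter (fun p => p.1 = i) := by rw [hfi]; simp
    exact (Finset.mem_filter.mp this).1
  refine ⟨i, fun j => if (j, (2:Fin 3)) ∈ S then 2 else 1, fun j => by by_cases h : (j, (2:Fin 3)) ∈ S <;> simp [h], ?_⟩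
  ext ⟨a1, a2⟩
  rw [mem_repB]
  constructor
  · intro h
    by_cases ha : a1 = i
    · subst ha
      have : (a1, a2) ∈ S.filter (fun p => p.1 = a1) := Finset.mem_filter.mpr ⟨h, rfl⟩
      rw [hfi] at this
      simp only [Finset.mem_insert, Finset.mem_singleton] at this
      rcases this with h' | h'
      · exact Or.inl h'
      · exact Or.inr (Or.inl h')
    · refine Or.inr (Or.inr ⟨ha, ?_⟩)
      simp only
      rcases fin3cases a2 with h' | h' | h' <;> subst h'
      · exact absurd h (hnz a1 ha)
      · rw [if_neg (cf12 hS h)]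
      · rw [if_pos h]
  · rintro (h | h | ⟨ha, hb⟩)
    · simp only [Prod.mk.injEq] at h
      obtain ⟨rfl, rfl⟩ := h
      exact hi
    · simp only [Prod.mk.injEq] at h
      obtain ⟨rfl, rfl⟩ := h
      exact h2i
    · simp only at ha hb
      have hcard1 : (S.filter (fun p => p.1 = a1)).card = 1 :=
        hforced a1 (Finset.mem_erase.mpr ⟨ha, Finset.mem_univ a1⟩)
      have hne : (S.filter (fun p => p.1 = a1)).Nonempty :=
        Finset.card_pos.mp (by omega)
      obtain ⟨⟨c1, c2⟩, hc⟩ := hne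
      simp only [Finset.mem_filter] at hc
      obtain ⟨hcS, rfl⟩ := hc
      by_cases h2 : (c1, (2:Fin 3)) ∈ S
      · rw [if_pos h2] at hb
        subst hb
        exact h2
      · rw [if_neg h2] at hb
        subst hb
        rcases fin3cases c2 with h' | h' | h' <;> subst h'
        · exact absurd hcS (hnz c1 ha)
        · exact hcS
        · exact absurd hcS h2

lemma repB_cf (i : Fin n) (f : Fin n → Fin 3) (hf : ∀ j, f j = 1 ∨ f j = 2) :
    ConflictFree (ConfDn n) (repB n i f) := by
  rintro ⟨a1, a2⟩ ha ⟨b1, b2⟩ hb hC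
  rw [mem_repB] at ha hb
  simp only [Prod.ext_iff] at ha hb
  rcases ha with ⟨rfl, rfl⟩ | ⟨rfl, rfl⟩ | ⟨ha1, rfl⟩ <;>
    rcases hb with ⟨rfl, rfl⟩ | ⟨rfl, rfl⟩ | ⟨hb1, rfl⟩ <;>
    [skip; skip; rcases hf b1 with hb2 | hb2; skip; skip; rcases hf b1 with hb2 | hb2;
     rcases hf a1 with ha2 | ha2; rcases hf a1 with ha2 | ha2;
     rcases hf a1 with ha2 | ha2 <;> rcases hf b1 with hb2 | hb2] <;>
    simp_all [ConfDn]

lemma repA_card : (repA n).card = n := by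
  rw [repA, Finset.card_image_of_injective _ (fun a b h => (Prod.ext_iff.mp h).1)]
  simp

lemma repB_card (i : Fin n) (f : Fin n → Fin 3) : (repB n i f).card = n + 1 := by
  have h4 : 1 ≤ n := i.pos
  have himg : ((Finset.univ.erase i).image (fun j => (j, f j))).card = n - 1 := by
    rw [Finset.card_image_of_injective _ (fun a b h => (Prod.ext_iff.mp h).1),
      Finset.card_erase_of_mem (Finset.mem_univ i)]
    simp
  have h2 : ((i, (2:Fin 3))) ∉ (Finset.univ.erase i).image (fun j => (j, f j)) := by
    simp only [Finset.mem_image, Finset.mem_erase, Finset.mem_univ, and_true,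
      not_exists, not_and]
    intro j hj h
    exact hj (congrArg Prod.fst h)
  have h0 : ((i, (0:Fin 3))) ∉ insert ((i, (2:Fin 3)))
      ((Finset.univ.erase i).image (fun j => (j, f j))) := by
    simp only [Finset.mem_insert, Finset.mem_image, Finset.mem_erase, Finset.mem_univ, and_true,
      not_or, not_exists, not_and]
    constructor
    · intro h; exact absurd (congrArg Prod.snd h) (by simp)
    · intro j hj h; exact hj (congrArg Prod.fst h)
  rw [repB, Finset.card_insert_of_notMem h0, Finset.card_insert_of_notMem h2, himg]
  omega

end Aux

theorem stmt15 (n : ℕ) (hn : 2 ≤ n) :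
    (∀ S : Finset (Fin n × Fin 3),
      IsCardRepair (ConfDn n) S
      ↔ ∃ (i : Fin n) (f : Fin n → Fin 3),
          (∀ j, f j = 1 ∨ f j = 2) ∧ S = repB n i f)
    ∧ ¬ IsCardRepair (ConfDn n) (repA n)
    ∧ (repA n).card = n
    ∧ (∀ (i : Fin n) (f : Fin n → Fin 3),
        (∀ j, f j = 1 ∨ f j = 2) → (repB n i f).card = n + 1) := by
  have i0 : Fin n := ⟨0, by omega⟩
  have hB0 : ConflictFree (ConfDn n) (repB n i0 (fun _ => 1)) :=
    repB_cf i0 _ (fun j => Or.inl rfl)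
  have hB0card : (repB n i0 (fun _ => 1)).card = n + 1 := repB_card i0 _
  refine ⟨?_, ?_, repA_card, fun i f _ => repB_card i f⟩
  · intro S
    constructor
    · rintro ⟨hcf, hmax⟩
      have h1 : S.card ≤ n + 1 := cf_card_le hcf
      have h2 : n + 1 ≤ S.card := hB0card ▸ hmax _ hB0
      exact structure_lemma hcf (by omega)
    · rintro ⟨i, f, hf, rfl⟩
      exact ⟨repB_cf i f hf, fun S' hS' => by
        rw [repB_card i f]; exact cf_card_le hS'⟩
  · rintro ⟨hcf, hmax⟩
    have h := hmax _ hB0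
    rw [hB0card, repA_card] at h
    omega
end
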